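/- Let K ⊂ ℝⁿ (n ≥ 2) be a compact convex body of volume 1, and let m(y,z) denote the (n−2)-dimensional Lebesgue measure of the section {x ∈ K : x₁ = y, x₂ = z}. For bounded measurable functions f, g : ℝ → ℝ, letting X = (X₁,…,Xₙ) be uniformly distributed on K, the covariance satisfies: cov(f(X₁), g(X₂)) = (1/4) ∫_{ℝ⁴} (m(y,z)·m(ȳ,z̄) − m(y,z̄)·m(ȳ,z)) · (f(y) − f(ȳ)) · (g(z) − g(z̄)) dy dz dȳ dz̄. -/

import Mathlib

open MeasureTheory

namespace CovFormulaAux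

noncomputable def T1 : (ℝ × ℝ) × (ℝ × ℝ) ≃ᵐ ℝ × ℝ × ℝ × ℝ :=
  MeasurableEquiv.prodAssoc.trans
    ((MeasurableEquiv.refl ℝ).prodCongr
      (MeasurableEquiv.prodAssoc.symm.trans
        ((MeasurableEquiv.prodComm.prodCongr (MeasurableEquiv.refl ℝ)).trans
          MeasurableEquiv.prodAssoc)))

noncomputable def T2 : (ℝ × ℝ) × (ℝ × ℝ) ≃ᵐ ℝ × ℝ × ℝ × ℝ :=
  T1.trans ((MeasurableEquiv.refl ℝ).prodCongr
    ((MeasurableEquiv.refl ℝ).prodCongr MeasurableEquiv.prodComm))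

lemma hT1 : MeasurePreserving (⇑T1) volume volume := by
  have h1 : MeasurePreserving (⇑(MeasurableEquiv.prodComm : ℝ×ℝ ≃ᵐ ℝ×ℝ)) volume volume :=
    (Measure.measurePreserving_swap : MeasurePreserving _ (volume.prod volume) (volume.prod volume))
  have hA : MeasurePreserving (⇑(MeasurableEquiv.prodAssoc : (ℝ×ℝ)×ℝ ≃ᵐ ℝ×ℝ×ℝ)) volume volume :=
    volume_preserving_prodAssoc
  have : MeasurePreserving
      (Prod.map (id : ℝ → ℝ)
        (⇑(MeasurableEquiv.prodAssoc : (ℝ×ℝ)×ℝ ≃ᵐ ℝ×ℝ×ℝ) ∘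
          Prod.map (⇑(MeasurableEquiv.prodComm : ℝ×ℝ ≃ᵐ ℝ×ℝ)) (id : ℝ → ℝ) ∘
          ⇑(MeasurableEquiv.prodAssoc : (ℝ×ℝ)×ℝ ≃ᵐ ℝ×ℝ×ℝ).symm) ∘
        ⇑(MeasurableEquiv.prodAssoc : (ℝ×ℝ)×(ℝ×ℝ) ≃ᵐ ℝ×(ℝ×(ℝ×ℝ)))) volume volume :=
    ((MeasurePreserving.id volume).prod
      (hA.comp ((h1.prod (MeasurePreserving.id volume)).comp
          (hA.symm MeasurableEquiv.prodAssoc)))).comp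
      (volume_preserving_prodAssoc :
        MeasurePreserving (⇑(MeasurableEquiv.prodAssoc : (ℝ×ℝ)×(ℝ×ℝ) ≃ᵐ ℝ×(ℝ×(ℝ×ℝ)))) volume volume)
  exact this

lemma hT2 : MeasurePreserving (⇑T2) volume volume := by
  have h1 : MeasurePreserving (⇑(MeasurableEquiv.prodComm : ℝ×ℝ ≃ᵐ ℝ×ℝ)) volume volume :=
    (Measure.measurePreserving_swap : MeasurePreserving _ (volume.prod volume) (volume.prod volume))
  have : MeasurePreserving
      (Prod.map (id : ℝ → ℝ) (Prod.map (id : ℝ → ℝ) (⇑(MeasurableEquiv.prodComm : ℝ×ℝ ≃ᵐ ℝ×ℝ))) ∘ ⇑T1)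
      volume volume :=
    ((MeasurePreserving.id volume).prod ((MeasurePreserving.id volume).prod h1)).comp hT1
  exact this

lemma pair1 (F G : ℝ × ℝ → ℝ) (hF : Integrable F) (hG : Integrable G) :
    Integrable (fun p : ℝ × ℝ × ℝ × ℝ => F (p.1, p.2.2.1) * G (p.2.1, p.2.2.2)) ∧
    (∫ p : ℝ × ℝ × ℝ × ℝ, F (p.1, p.2.2.1) * G (p.2.1, p.2.2.2))
      = (∫ q : ℝ × ℝ, F q) * ∫ q : ℝ × ℝ, G q := by
  have hFG : Integrable (fun q : (ℝ × ℝ) × (ℝ × ℝ) => F q.1 * G q.2) volume := by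
    rw [Measure.volume_eq_prod _ _]; exact hF.mul_prod hG
  have hc : ((fun p : ℝ × ℝ × ℝ × ℝ => F (p.1, p.2.2.1) * G (p.2.1, p.2.2.2)) ∘ ⇑T1)
      = fun q : (ℝ × ℝ) × (ℝ × ℝ) => F q.1 * G q.2 := rfl
  constructor
  · exact (hT1.integrable_comp_emb T1.measurableEmbedding).mp (by rw [hc]; exact hFG)
  · calc (∫ p : ℝ × ℝ × ℝ × ℝ, F (p.1, p.2.2.1) * G (p.2.1, p.2.2.2))
        = ∫ q : (ℝ × ℝ) × (ℝ × ℝ), F q.1 * G q.2 :=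
          (hT1.integral_comp T1.measurableEmbedding _).symm
      _ = (∫ q : ℝ × ℝ, F q) * ∫ q : ℝ × ℝ, G q := by
          rw [Measure.volume_eq_prod _ _]; exact integral_prod_mul F G

lemma pair2 (F G : ℝ × ℝ → ℝ) (hF : Integrable F) (hG : Integrable G) :
    Integrable (fun p : ℝ × ℝ × ℝ × ℝ => F (p.1, p.2.2.2) * G (p.2.1, p.2.2.1)) ∧
    (∫ p : ℝ × ℝ × ℝ × ℝ, F (p.1, p.2.2.2) * G (p.2.1, p.2.2.1))
      = (∫ q : ℝ × ℝ, F q) * ∫ q : ℝ × ℝ, G q := by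
  have hFG : Integrable (fun q : (ℝ × ℝ) × (ℝ × ℝ) => F q.1 * G q.2) volume := by
    rw [Measure.volume_eq_prod _ _]; exact hF.mul_prod hG
  have hc : ((fun p : ℝ × ℝ × ℝ × ℝ => F (p.1, p.2.2.2) * G (p.2.1, p.2.2.1)) ∘ ⇑T2)
      = fun q : (ℝ × ℝ) × (ℝ × ℝ) => F q.1 * G q.2 := rfl
  constructor
  · exact (hT2.integrable_comp_emb T2.measurableEmbedding).mp (by rw [hc]; exact hFG)
  · calc (∫ p : ℝ × ℝ × ℝ × ℝ, F (p.1, p.2.2.2) * G (p.2.1, p.2.2.1))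
        = ∫ q : (ℝ × ℝ) × (ℝ × ℝ), F q.1 * G q.2 :=
          (hT2.integral_comp T2.measurableEmbedding _).symm
      _ = (∫ q : ℝ × ℝ, F q) * ∫ q : ℝ × ℝ, G q := by
          rw [Measure.volume_eq_prod _ _]; exact integral_prod_mul F G

end CovFormulaAux
open CovFormulaAux in
theorem covariance_formula (k : ℕ) (K : Set (Fin (k + 2) → ℝ))
    (hKc : IsCompact K) (hconv : Convex ℝ K) (hvol : volume K = 1)
    (f g : ℝ → ℝ) (hf : Measurable f) (hg : Measurable g)
    (Cf Cg : ℝ) (hfb : ∀ t, |f t| ≤ Cf) (hgb : ∀ t, |g t| ≤ Cg)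
    (m : ℝ → ℝ → ℝ)
    (hm : ∀ y z, m y z =
      (volume {w : Fin k → ℝ | Fin.cons y (Fin.cons z w) ∈ K}).toReal) :
    (∫ x in K, f (x 0) * g (x 1)) -
      (∫ x in K, f (x 0)) * (∫ x in K, g (x 1)) =
    (1 / 4) * ∫ p : ℝ × ℝ × ℝ × ℝ,
      (m p.1 p.2.2.1 * m p.2.1 p.2.2.2 - m p.1 p.2.2.2 * m p.2.1 p.2.2.1) *
        (f p.1 - f p.2.1) * (g p.2.2.1 - g p.2.2.2) := by
  classical
  -- the measure preserving parametrization
  have hιeq : (fun q : (ℝ × ℝ) × (Fin k → ℝ) =>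
      (Fin.cons q.1.1 (Fin.cons q.1.2 q.2) : Fin (k + 2) → ℝ)) =
      ⇑(MeasurableEquiv.prodAssoc.trans
        (((MeasurableEquiv.refl ℝ).prodCongr
            (MeasurableEquiv.piFinSuccAbove (fun _ : Fin (k + 1) => ℝ) 0).symm).trans
          (MeasurableEquiv.piFinSuccAbove (fun _ : Fin (k + 2) => ℝ) 0).symm)) := by
    funext q
    simp [MeasurableEquiv.prodAssoc, MeasurableEquiv.piFinSuccAbove_symm_apply,
      Fin.insertNth_zero', MeasurableEquiv.prodCongr, Equiv.prodCongr, Fin.consEquiv]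
  have hιmp : MeasurePreserving (fun q : (ℝ × ℝ) × (Fin k → ℝ) =>
      (Fin.cons q.1.1 (Fin.cons q.1.2 q.2) : Fin (k + 2) → ℝ)) volume volume := by
    rw [hιeq]
    exact (((volume_preserving_piFinSuccAbove (fun _ : Fin (k + 2) => ℝ) 0).symm _).comp
      (((MeasurePreserving.id volume).prod
        ((volume_preserving_piFinSuccAbove (fun _ : Fin (k + 1) => ℝ) 0).symm _)).comp
        volume_preserving_prodAssoc) : MeasurePreserving _ volume volume)
  have hιemb : MeasurableEmbedding (fun q : (ℝ × ℝ) × (Fin k → ℝ) =>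
      (Fin.cons q.1.1 (Fin.cons q.1.2 q.2) : Fin (k + 2) → ℝ)) := by
    rw [hιeq]; exact MeasurableEquiv.measurableEmbedding _
  have hKm : MeasurableSet K := hKc.isClosed.measurableSet
  have hSm : MeasurableSet {q : (ℝ × ℝ) × (Fin k → ℝ) |
      (Fin.cons q.1.1 (Fin.cons q.1.2 q.2) : Fin (k + 2) → ℝ) ∈ K} :=
    hKm.preimage hιmp.measurable
  have hSvol : volume {q : (ℝ × ℝ) × (Fin k → ℝ) |
      (Fin.cons q.1.1 (Fin.cons q.1.2 q.2) : Fin (k + 2) → ℝ) ∈ K} = 1 := by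
    have := hιmp.measure_preimage hKm.nullMeasurableSet
    rw [← hvol]; exact this
  -- the key disintegration lemma
  have key : ∀ φ : ℝ × ℝ → ℝ, Measurable φ → ∀ C : ℝ, (∀ q, |φ q| ≤ C) →
      Integrable (fun q : ℝ × ℝ => m q.1 q.2 * φ q) volume ∧
      (∫ q : ℝ × ℝ, m q.1 q.2 * φ q) = ∫ x in K, φ (x 0, x 1) := by
    intro φ hφ C hC
    set S : Set ((ℝ × ℝ) × (Fin k → ℝ)) := {q : (ℝ × ℝ) × (Fin k → ℝ) |
      (Fin.cons q.1.1 (Fin.cons q.1.2 q.2) : Fin (k + 2) → ℝ) ∈ K} with hSdef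
    have hind : Integrable (S.indicator (fun p => φ p.1)) volume := by
      rw [integrable_indicator_iff hSm]
      apply Measure.integrableOn_of_bounded (M := C)
      · rw [hSvol]; exact ENNReal.one_ne_top
      · exact (hφ.comp measurable_fst).aestronglyMeasurable
      · exact ae_of_all _ fun p => by simpa [Real.norm_eq_abs] using hC p.1
    have hindp : Integrable (S.indicator (fun p => φ p.1))
        ((volume : Measure (ℝ × ℝ)).prod (volume : Measure (Fin k → ℝ))) := by
      rw [← Measure.volume_eq_prod _ _]; exact hind
    have hmarg : ∀ q : ℝ × ℝ,
        (∫ w : Fin k → ℝ, S.indicator (fun p => φ p.1) (q, w)) = m q.1 q.2 * φ q := by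
      intro q
      have hset : (fun w : Fin k → ℝ => S.indicator (fun p => φ p.1) (q, w))
          = (Prod.mk q ⁻¹' S).indicator (fun _ => φ q) := by
        funext w
        by_cases h : (q, w) ∈ S
        · simp [Set.indicator, h, Set.mem_preimage]
        · simp [Set.indicator, h, Set.mem_preimage]
      rw [hset, integral_indicator_const _ (measurable_prodMk_left hSm)]
      rw [hm q.1 q.2, smul_eq_mul]
      rw [hSdef]
      rfl
    constructor
    · exact hindp.integral_prod_left.congr (ae_of_all _ hmarg)
    · calc (∫ q : ℝ × ℝ, m q.1 q.2 * φ q)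
          = ∫ q : ℝ × ℝ, ∫ w : Fin k → ℝ, S.indicator (fun p => φ p.1) (q, w) :=
            (integral_congr_ae (ae_of_all _ hmarg)).symm
        _ = ∫ p, S.indicator (fun p => φ p.1) p
            ∂((volume : Measure (ℝ × ℝ)).prod (volume : Measure (Fin k → ℝ))) :=
            (integral_prod _ hindp).symm
        _ = ∫ p : (ℝ × ℝ) × (Fin k → ℝ), S.indicator (fun p => φ p.1) p := by
            rw [← Measure.volume_eq_prod _ _]
        _ = ∫ p in S, φ p.1 := integral_indicator hSm
        _ = ∫ x in K, φ (x 0, x 1) := by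
            have h2 := hιmp.setIntegral_preimage_emb hιemb (fun x => φ (x 0, x 1)) K
            rw [← h2]
            refine setIntegral_congr_fun hSm fun p _ => ?_
            have h0 : (Fin.cons p.1.1 (Fin.cons p.1.2 p.2) : Fin (k + 2) → ℝ) 0 = p.1.1 :=
              Fin.cons_zero _ _
            have h1 : (Fin.cons p.1.1 (Fin.cons p.1.2 p.2) : Fin (k + 2) → ℝ) 1 = p.1.2 := by
              rw [← Fin.succ_zero_eq_one, Fin.cons_succ, Fin.cons_zero]
            simp [h0, h1]
  have hCf0 : (0 : ℝ) ≤ Cf := le_trans (abs_nonneg _) (hfb 0)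
  -- the four basic 2-d integrals
  have kA := key (fun q => f q.1 * g q.2)
    ((hf.comp measurable_fst).mul (hg.comp measurable_snd)) (Cf * Cg)
    (fun q => by
      rw [abs_mul]
      exact mul_le_mul (hfb _) (hgb _) (abs_nonneg _) hCf0)
  have kB := key (fun q => f q.1) (hf.comp measurable_fst) Cf (fun q => hfb q.1)
  have kC := key (fun q => g q.2) (hg.comp measurable_snd) Cg (fun q => hgb q.2)
  have kM := key (fun _ => 1) measurable_const 1 (by norm_num)
  have hIA : Integrable (fun q : ℝ × ℝ => m q.1 q.2 * (f q.1 * g q.2)) volume := kA.1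
  have hIB : Integrable (fun q : ℝ × ℝ => m q.1 q.2 * f q.1) volume := kB.1
  have hIC : Integrable (fun q : ℝ × ℝ => m q.1 q.2 * g q.2) volume := kC.1
  have hIM : Integrable (fun q : ℝ × ℝ => m q.1 q.2) volume := by
    have := kM.1; simpa using this
  have hEA : (∫ q : ℝ × ℝ, m q.1 q.2 * (f q.1 * g q.2)) = ∫ x in K, f (x 0) * g (x 1) := kA.2
  have hEB : (∫ q : ℝ × ℝ, m q.1 q.2 * f q.1) = ∫ x in K, f (x 0) := kB.2
  have hEC : (∫ q : ℝ × ℝ, m q.1 q.2 * g q.2) = ∫ x in K, g (x 1) := kC.2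
  have hEM : (∫ q : ℝ × ℝ, m q.1 q.2) = 1 := by
    have h := kM.2
    simp only [mul_one] at h
    rw [h, setIntegral_const, measureReal_def, hvol]
    simp
  -- the eight product terms
  have p1 := pair1 (fun q => m q.1 q.2 * (f q.1 * g q.2)) (fun q => m q.1 q.2) hIA hIM
  have p2 := pair1 (fun q => m q.1 q.2 * f q.1) (fun q => m q.1 q.2 * g q.2) hIB hIC
  have p3 := pair1 (fun q => m q.1 q.2 * g q.2) (fun q => m q.1 q.2 * f q.1) hIC hIB
  have p4 := pair1 (fun q => m q.1 q.2) (fun q => m q.1 q.2 * (f q.1 * g q.2)) hIM hIA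
  have p5 := pair2 (fun q => m q.1 q.2 * f q.1) (fun q => m q.1 q.2 * g q.2) hIB hIC
  have p6 := pair2 (fun q => m q.1 q.2 * (f q.1 * g q.2)) (fun q => m q.1 q.2) hIA hIM
  have p7 := pair2 (fun q => m q.1 q.2) (fun q => m q.1 q.2 * (f q.1 * g q.2)) hIM hIA
  have p8 := pair2 (fun q => m q.1 q.2 * g q.2) (fun q => m q.1 q.2 * f q.1) hIC hIB
  have i1 : Integrable (fun p : ℝ × ℝ × ℝ × ℝ =>
      m p.1 p.2.2.1 * (f p.1 * g p.2.2.1) * (m p.2.1 p.2.2.2)) volume := p1.1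
  have i2 : Integrable (fun p : ℝ × ℝ × ℝ × ℝ =>
      m p.1 p.2.2.1 * f p.1 * (m p.2.1 p.2.2.2 * g p.2.2.2)) volume := p2.1
  have i3 : Integrable (fun p : ℝ × ℝ × ℝ × ℝ =>
      m p.1 p.2.2.1 * g p.2.2.1 * (m p.2.1 p.2.2.2 * f p.2.1)) volume := p3.1
  have i4 : Integrable (fun p : ℝ × ℝ × ℝ × ℝ =>
      m p.1 p.2.2.1 * (m p.2.1 p.2.2.2 * (f p.2.1 * g p.2.2.2))) volume := p4.1
  have i5 : Integrable (fun p : ℝ × ℝ × ℝ × ℝ =>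
      m p.1 p.2.2.2 * f p.1 * (m p.2.1 p.2.2.1 * g p.2.2.1)) volume := p5.1
  have i6 : Integrable (fun p : ℝ × ℝ × ℝ × ℝ =>
      m p.1 p.2.2.2 * (f p.1 * g p.2.2.2) * (m p.2.1 p.2.2.1)) volume := p6.1
  have i7 : Integrable (fun p : ℝ × ℝ × ℝ × ℝ =>
      m p.1 p.2.2.2 * (m p.2.1 p.2.2.1 * (f p.2.1 * g p.2.2.1))) volume := p7.1
  have i8 : Integrable (fun p : ℝ × ℝ × ℝ × ℝ =>
      m p.1 p.2.2.2 * g p.2.2.2 * (m p.2.1 p.2.2.1 * f p.2.1)) volume := p8.1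
  have v1 : (∫ p : ℝ × ℝ × ℝ × ℝ, m p.1 p.2.2.1 * (f p.1 * g p.2.2.1) * (m p.2.1 p.2.2.2))
      = (∫ q : ℝ × ℝ, m q.1 q.2 * (f q.1 * g q.2)) * ∫ q : ℝ × ℝ, m q.1 q.2 := p1.2
  have v2 : (∫ p : ℝ × ℝ × ℝ × ℝ, m p.1 p.2.2.1 * f p.1 * (m p.2.1 p.2.2.2 * g p.2.2.2))
      = (∫ q : ℝ × ℝ, m q.1 q.2 * f q.1) * ∫ q : ℝ × ℝ, m q.1 q.2 * g q.2 := p2.2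
  have v3 : (∫ p : ℝ × ℝ × ℝ × ℝ, m p.1 p.2.2.1 * g p.2.2.1 * (m p.2.1 p.2.2.2 * f p.2.1))
      = (∫ q : ℝ × ℝ, m q.1 q.2 * g q.2) * ∫ q : ℝ × ℝ, m q.1 q.2 * f q.1 := p3.2
  have v4 : (∫ p : ℝ × ℝ × ℝ × ℝ, m p.1 p.2.2.1 * (m p.2.1 p.2.2.2 * (f p.2.1 * g p.2.2.2)))
      = (∫ q : ℝ × ℝ, m q.1 q.2) * ∫ q : ℝ × ℝ, m q.1 q.2 * (f q.1 * g q.2) := p4.2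
  have v5 : (∫ p : ℝ × ℝ × ℝ × ℝ, m p.1 p.2.2.2 * f p.1 * (m p.2.1 p.2.2.1 * g p.2.2.1))
      = (∫ q : ℝ × ℝ, m q.1 q.2 * f q.1) * ∫ q : ℝ × ℝ, m q.1 q.2 * g q.2 := p5.2
  have v6 : (∫ p : ℝ × ℝ × ℝ × ℝ, m p.1 p.2.2.2 * (f p.1 * g p.2.2.2) * (m p.2.1 p.2.2.1))
      = (∫ q : ℝ × ℝ, m q.1 q.2 * (f q.1 * g q.2)) * ∫ q : ℝ × ℝ, m q.1 q.2 := p6.2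
  have v7 : (∫ p : ℝ × ℝ × ℝ × ℝ, m p.1 p.2.2.2 * (m p.2.1 p.2.2.1 * (f p.2.1 * g p.2.2.1)))
      = (∫ q : ℝ × ℝ, m q.1 q.2) * ∫ q : ℝ × ℝ, m q.1 q.2 * (f q.1 * g q.2) := p7.2
  have v8 : (∫ p : ℝ × ℝ × ℝ × ℝ, m p.1 p.2.2.2 * g p.2.2.2 * (m p.2.1 p.2.2.1 * f p.2.1))
      = (∫ q : ℝ × ℝ, m q.1 q.2 * g q.2) * ∫ q : ℝ × ℝ, m q.1 q.2 * f q.1 := p8.2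
  have hsplit : (fun p : ℝ × ℝ × ℝ × ℝ =>
      (m p.1 p.2.2.1 * m p.2.1 p.2.2.2 - m p.1 p.2.2.2 * m p.2.1 p.2.2.1) *
        (f p.1 - f p.2.1) * (g p.2.2.1 - g p.2.2.2))
      = fun p : ℝ × ℝ × ℝ × ℝ =>
        (m p.1 p.2.2.1 * (f p.1 * g p.2.2.1) * (m p.2.1 p.2.2.2) -
          m p.1 p.2.2.1 * f p.1 * (m p.2.1 p.2.2.2 * g p.2.2.2) -
          m p.1 p.2.2.1 * g p.2.2.1 * (m p.2.1 p.2.2.2 * f p.2.1) +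
          m p.1 p.2.2.1 * (m p.2.1 p.2.2.2 * (f p.2.1 * g p.2.2.2))) -
        (m p.1 p.2.2.2 * f p.1 * (m p.2.1 p.2.2.1 * g p.2.2.1) -
          m p.1 p.2.2.2 * (f p.1 * g p.2.2.2) * (m p.2.1 p.2.2.1) -
          m p.1 p.2.2.2 * (m p.2.1 p.2.2.1 * (f p.2.1 * g p.2.2.1)) +
          m p.1 p.2.2.2 * g p.2.2.2 * (m p.2.1 p.2.2.1 * f p.2.1)) := by
    funext p; ring
  have E12 : (∫ p : ℝ × ℝ × ℝ × ℝ, m p.1 p.2.2.1 * (f p.1 * g p.2.2.1) * m p.2.1 p.2.2.2 - m p.1 p.2.2.1 * f p.1 * (m p.2.1 p.2.2.2 * g p.2.2.2)) = (∫ p : ℝ × ℝ × ℝ × ℝ, m p.1 p.2.2.1 * (f p.1 * g p.2.2.1) * m p.2.1 p.2.2.2) - (∫ p : ℝ × ℝ × ℝ × ℝ, m p.1 p.2.2.1 * f p.1 * (m p.2.1 p.2.2.2 * g p.2.2.2)) := integral_sub i1 i2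
  have E123 : (∫ p : ℝ × ℝ × ℝ × ℝ, m p.1 p.2.2.1 * (f p.1 * g p.2.2.1) * m p.2.1 p.2.2.2 - m p.1 p.2.2.1 * f p.1 * (m p.2.1 p.2.2.2 * g p.2.2.2) - m p.1 p.2.2.1 * g p.2.2.1 * (m p.2.1 p.2.2.2 * f p.2.1)) = (∫ p : ℝ × ℝ × ℝ × ℝ, m p.1 p.2.2.1 * (f p.1 * g p.2.2.1) * m p.2.1 p.2.2.2 - m p.1 p.2.2.1 * f p.1 * (m p.2.1 p.2.2.2 * g p.2.2.2)) - (∫ p : ℝ × ℝ × ℝ × ℝ, m p.1 p.2.2.1 * g p.2.2.1 * (m p.2.1 p.2.2.2 * f p.2.1)) :=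
    integral_sub (i1.sub i2) i3
  have E1234 : (∫ p : ℝ × ℝ × ℝ × ℝ, m p.1 p.2.2.1 * (f p.1 * g p.2.2.1) * m p.2.1 p.2.2.2 - m p.1 p.2.2.1 * f p.1 * (m p.2.1 p.2.2.2 * g p.2.2.2) - m p.1 p.2.2.1 * g p.2.2.1 * (m p.2.1 p.2.2.2 * f p.2.1) + m p.1 p.2.2.1 * (m p.2.1 p.2.2.2 * (f p.2.1 * g p.2.2.2))) = (∫ p : ℝ × ℝ × ℝ × ℝ, m p.1 p.2.2.1 * (f p.1 * g p.2.2.1) * m p.2.1 p.2.2.2 - m p.1 p.2.2.1 * f p.1 * (m p.2.1 p.2.2.2 * g p.2.2.2) - m p.1 p.2.2.1 * g p.2.2.1 * (m p.2.1 p.2.2.2 * f p.2.1)) + (∫ p : ℝ × ℝ × ℝ × ℝ, m p.1 p.2.2.1 * (m p.2.1 p.2.2.2 * (f p.2.1 * g p.2.2.2))) :=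
    integral_add ((i1.sub i2).sub i3) i4
  have E56 : (∫ p : ℝ × ℝ × ℝ × ℝ, m p.1 p.2.2.2 * f p.1 * (m p.2.1 p.2.2.1 * g p.2.2.1) - m p.1 p.2.2.2 * (f p.1 * g p.2.2.2) * m p.2.1 p.2.2.1) = (∫ p : ℝ × ℝ × ℝ × ℝ, m p.1 p.2.2.2 * f p.1 * (m p.2.1 p.2.2.1 * g p.2.2.1)) - (∫ p : ℝ × ℝ × ℝ × ℝ, m p.1 p.2.2.2 * (f p.1 * g p.2.2.2) * m p.2.1 p.2.2.1) := integral_sub i5 i6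
  have E567 : (∫ p : ℝ × ℝ × ℝ × ℝ, m p.1 p.2.2.2 * f p.1 * (m p.2.1 p.2.2.1 * g p.2.2.1) - m p.1 p.2.2.2 * (f p.1 * g p.2.2.2) * m p.2.1 p.2.2.1 - m p.1 p.2.2.2 * (m p.2.1 p.2.2.1 * (f p.2.1 * g p.2.2.1))) = (∫ p : ℝ × ℝ × ℝ × ℝ, m p.1 p.2.2.2 * f p.1 * (m p.2.1 p.2.2.1 * g p.2.2.1) - m p.1 p.2.2.2 * (f p.1 * g p.2.2.2) * m p.2.1 p.2.2.1) - (∫ p : ℝ × ℝ × ℝ × ℝ, m p.1 p.2.2.2 * (m p.2.1 p.2.2.1 * (f p.2.1 * g p.2.2.1))) :=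
    integral_sub (i5.sub i6) i7
  have E5678 : (∫ p : ℝ × ℝ × ℝ × ℝ, m p.1 p.2.2.2 * f p.1 * (m p.2.1 p.2.2.1 * g p.2.2.1) - m p.1 p.2.2.2 * (f p.1 * g p.2.2.2) * m p.2.1 p.2.2.1 - m p.1 p.2.2.2 * (m p.2.1 p.2.2.1 * (f p.2.1 * g p.2.2.1)) + m p.1 p.2.2.2 * g p.2.2.2 * (m p.2.1 p.2.2.1 * f p.2.1)) = (∫ p : ℝ × ℝ × ℝ × ℝ, m p.1 p.2.2.2 * f p.1 * (m p.2.1 p.2.2.1 * g p.2.2.1) - m p.1 p.2.2.2 * (f p.1 * g p.2.2.2) * m p.2.1 p.2.2.1 - m p.1 p.2.2.2 * (m p.2.1 p.2.2.1 * (f p.2.1 * g p.2.2.1))) + (∫ p : ℝ × ℝ × ℝ × ℝ, m p.1 p.2.2.2 * g p.2.2.2 * (m p.2.1 p.2.2.1 * f p.2.1)) :=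
    integral_add ((i5.sub i6).sub i7) i8
  have Etop : (∫ p : ℝ × ℝ × ℝ × ℝ, (m p.1 p.2.2.1 * (f p.1 * g p.2.2.1) * m p.2.1 p.2.2.2 - m p.1 p.2.2.1 * f p.1 * (m p.2.1 p.2.2.2 * g p.2.2.2) - m p.1 p.2.2.1 * g p.2.2.1 * (m p.2.1 p.2.2.2 * f p.2.1) + m p.1 p.2.2.1 * (m p.2.1 p.2.2.2 * (f p.2.1 * g p.2.2.2))) - (m p.1 p.2.2.2 * f p.1 * (m p.2.1 p.2.2.1 * g p.2.2.1) - m p.1 p.2.2.2 * (f p.1 * g p.2.2.2) * m p.2.1 p.2.2.1 - m p.1 p.2.2.2 * (m p.2.1 p.2.2.1 * (f p.2.1 * g p.2.2.1)) + m p.1 p.2.2.2 * g p.2.2.2 * (m p.2.1 p.2.2.1 * f p.2.1))) = (∫ p : ℝ × ℝ × ℝ × ℝ, m p.1 p.2.2.1 * (f p.1 * g p.2.2.1) * m p.2.1 p.2.2.2 - m p.1 p.2.2.1 * f p.1 * (m p.2.1 p.2.2.2 * g p.2.2.2) - m p.1 p.2.2.1 * g p.2.2.1 * (m p.2.1 p.2.2.2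 * f p.2.1) + m p.1 p.2.2.1 * (m p.2.1 p.2.2.2 * (f p.2.1 * g p.2.2.2))) - (∫ p : ℝ × ℝ × ℝ × ℝ, m p.1 p.2.2.2 * f p.1 * (m p.2.1 p.2.2.1 * g p.2.2.1) - m p.1 p.2.2.2 * (f p.1 * g p.2.2.2) * m p.2.1 p.2.2.1 - m p.1 p.2.2.2 * (m p.2.1 p.2.2.1 * (f p.2.1 * g p.2.2.1)) + m p.1 p.2.2.2 * g p.2.2.2 * (m p.2.1 p.2.2.1 * f p.2.1)) :=
    integral_sub (((i1.sub i2).sub i3).add i4) (((i5.sub i6).sub i7).add i8)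
  rw [← hEA, ← hEB, ← hEC, hsplit, Etop, E1234, E123, E12, E5678, E567, E56,
    v1, v2, v3, v4, v5, v6, v7, v8, hEM]
  ring
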